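/- arXiv:1411.3312 — 2 statements merged into one kernel-verified Lean document; each statement's English description precedes it below -/
import Mathlib

section
/- Let G be a finite simple graph, r < s positive integers, k ≤ k' positive integers, 𝒮 a k-(r,s)-nucleus of G and 𝒮' a k'-(r,s)-nucleus of G. If there exists an r-clique R with R ∈ K_r(𝒮) ∩ K_r(𝒮'), then 𝒮' ⊆ 𝒮. In particular, two distinct k-(r,s)-nuclei of G (for the same k) share no r-clique: K_r(𝒮) ∩ K_r(𝒮') = ∅. -/
variable {V : Type*} [Fintype V] [DecidableEq V]

/-- `𝒮` is a set of `s`-cliques of the graph `G`. -/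
def CliqueSet (G : SimpleGraph V) (s : ℕ) (𝒮 : Finset (Finset V)) : Prop :=
  ∀ S ∈ 𝒮, G.IsNClique s S

/-- `R ∈ K_r(𝒮)`: `R` is an `r`-clique of `G` contained in some member of `𝒮`. -/
def InKr (G : SimpleGraph V) (r : ℕ) (𝒮 : Finset (Finset V)) (R : Finset V) : Prop :=
  G.IsNClique r R ∧ ∃ S ∈ 𝒮, R ⊆ S

/-- The `𝒮`-degree of `R`: the number of members of `𝒮` containing `R`. -/
def SDeg (𝒮 : Finset (Finset V)) (R : Finset V) : ℕ :=
  (𝒮.filter fun S => R ⊆ S).card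

/-- One step of `𝒮`-connectivity: both `R` and `R'` are in `K_r(𝒮)` and some member
of `𝒮` contains `R ∪ R'`. -/
def Step (G : SimpleGraph V) (r : ℕ) (𝒮 : Finset (Finset V)) (R R' : Finset V) : Prop :=
  InKr G r 𝒮 R ∧ InKr G r 𝒮 R' ∧ ∃ S ∈ 𝒮, R ∪ R' ⊆ S

/-- `R` and `R'` are `𝒮`-connected: there is a sequence of members of `K_r(𝒮)` from `R`
to `R'` in which each consecutive pair is contained in a common member of `𝒮`. -/
def SConnected (G : SimpleGraph V) (r : ℕ) (𝒮 : Finset (Finset V)) (R R' : Finset V) : Prop :=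
  Relation.ReflTransGen (Step G r 𝒮) R R'

/-- The degree condition at level `k`: every `R ∈ K_r(𝒮)` has `𝒮`-degree at least `k`. -/
def DegCond (G : SimpleGraph V) (r k : ℕ) (𝒮 : Finset (Finset V)) : Prop :=
  ∀ R, InKr G r 𝒮 R → k ≤ SDeg 𝒮 R

/-- The connectivity condition: every two members of `K_r(𝒮)` are `𝒮`-connected. -/
def ConnCond (G : SimpleGraph V) (r : ℕ) (𝒮 : Finset (Finset V)) : Prop :=
  ∀ R R', InKr G r 𝒮 R → InKr G r 𝒮 R' → SConnected G r 𝒮 R R'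

/-- `𝒮` satisfies all the (non-maximality) conditions of a `k`-`(r,s)`-nucleus. -/
def NucleusPre (G : SimpleGraph V) (r s k : ℕ) (𝒮 : Finset (Finset V)) : Prop :=
  CliqueSet G s 𝒮 ∧ DegCond G r k 𝒮 ∧ ConnCond G r 𝒮

/-- `𝒮` is a `k`-`(r,s)`-nucleus of `G`: a set of `s`-cliques, maximal under inclusion,
satisfying the degree condition at level `k` and the connectivity condition. -/
def IsNucleus (G : SimpleGraph V) (r s k : ℕ) (𝒮 : Finset (Finset V)) : Prop :=
  NucleusPre G r s k 𝒮 ∧ ∀ 𝒯, NucleusPre G r s k 𝒯 → 𝒮 ⊆ 𝒯 → 𝒯 = 𝒮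

lemma InKr.mono {G : SimpleGraph V} {r : ℕ} {𝒮 𝒯 : Finset (Finset V)} (h : 𝒮 ⊆ 𝒯)
    {R : Finset V} (hR : InKr G r 𝒮 R) : InKr G r 𝒯 R :=
  ⟨hR.1, hR.2.imp fun S hS => ⟨h hS.1, hS.2⟩⟩

lemma Step.mono {G : SimpleGraph V} {r : ℕ} {𝒮 𝒯 : Finset (Finset V)} (h : 𝒮 ⊆ 𝒯)
    {R R' : Finset V} (hR : Step G r 𝒮 R R') : Step G r 𝒯 R R' :=
  ⟨hR.1.mono h, hR.2.1.mono h, hR.2.2.imp fun S hS => ⟨h hS.1, hS.2⟩⟩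

lemma Step.symm {G : SimpleGraph V} {r : ℕ} {𝒮 : Finset (Finset V)}
    {R R' : Finset V} (hR : Step G r 𝒮 R R') : Step G r 𝒮 R' R :=
  ⟨hR.2.1, hR.1, by obtain ⟨S, hS, hsub⟩ := hR.2.2; exact ⟨S, hS, Finset.union_comm R R' ▸ hsub⟩⟩

lemma SConnected.mono {G : SimpleGraph V} {r : ℕ} {𝒮 𝒯 : Finset (Finset V)} (h : 𝒮 ⊆ 𝒯)
    {R R' : Finset V} (hR : SConnected G r 𝒮 R R') : SConnected G r 𝒯 R R' :=
  Relation.ReflTransGen.mono (fun _ _ (hs : Step G r 𝒮 _ _) => hs.mono h) _ _ hR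

lemma SConnected.symm {G : SimpleGraph V} {r : ℕ} {𝒮 : Finset (Finset V)}
    {R R' : Finset V} (hR : SConnected G r 𝒮 R R') : SConnected G r 𝒮 R' R :=
  @Std.Symm.symm _ _ (@Relation.ReflTransGen.symmetric _ (Step G r 𝒮) ⟨fun _ _ h => h.symm⟩) _ _ hR

lemma SDeg.mono {𝒮 𝒯 : Finset (Finset V)} (h : 𝒮 ⊆ 𝒯) (R : Finset V) :
    SDeg 𝒮 R ≤ SDeg 𝒯 R :=
  Finset.card_le_card (Finset.filter_subset_filter _ h)

lemma nuclei_nested (G : SimpleGraph V) (r s k k' : ℕ) (hkk' : k ≤ k')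
    (𝒮 𝒮' : Finset (Finset V))
    (hS : IsNucleus G r s k 𝒮) (hS' : IsNucleus G r s k' 𝒮')
    (R₀ : Finset V) (h1 : InKr G r 𝒮 R₀) (h2 : InKr G r 𝒮' R₀) : 𝒮' ⊆ 𝒮 := by
  obtain ⟨⟨hcs, hdeg, hconn⟩, hmax⟩ := hS
  obtain ⟨⟨hcs', hdeg', hconn'⟩, _⟩ := hS'
  have hpre : NucleusPre G r s k (𝒮 ∪ 𝒮') := by
    refine ⟨?_, ?_, ?_⟩
    · intro S hSmem
      rcases Finset.mem_union.1 hSmem with h | h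
      · exact hcs S h
      · exact hcs' S h
    · rintro R ⟨hcl, S, hSmem, hsub⟩
      rcases Finset.mem_union.1 hSmem with h | h
      · exact le_trans (hdeg R ⟨hcl, S, h, hsub⟩)
          (SDeg.mono Finset.subset_union_left R)
      · exact le_trans (le_trans hkk' (hdeg' R ⟨hcl, S, h, hsub⟩))
          (SDeg.mono Finset.subset_union_right R)
    · -- connectivity: every R in K_r(𝒮 ∪ 𝒮') connects to R₀
      have key : ∀ R, InKr G r (𝒮 ∪ 𝒮') R → SConnected G r (𝒮 ∪ 𝒮') R R₀ := by
        rintro R ⟨hcl, S, hSmem, hsub⟩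
        rcases Finset.mem_union.1 hSmem with h | h
        · exact (hconn R R₀ ⟨hcl, S, h, hsub⟩ h1).mono Finset.subset_union_left
        · exact (hconn' R R₀ ⟨hcl, S, h, hsub⟩ h2).mono Finset.subset_union_right
      intro R R' hR hR'
      exact (key R hR).trans (key R' hR').symm
  have := hmax (𝒮 ∪ 𝒮') hpre Finset.subset_union_left
  intro S hSmem
  exact this ▸ Finset.mem_union_right _ hSmem

/-- Nuclei sharing an `r`-clique are nested; distinct nuclei at the same
level `k` share no `r`-clique. -/
theorem nuclei_share_r_clique (G : SimpleGraph V) (r s k k' : ℕ)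
    (hr : 0 < r) (hrs : r < s) (hk : 0 < k) (hkk' : k ≤ k')
    (𝒮 𝒮' : Finset (Finset V))
    (hS : IsNucleus G r s k 𝒮) (hS' : IsNucleus G r s k' 𝒮') :
    ((∃ R : Finset V, InKr G r 𝒮 R ∧ InKr G r 𝒮' R) → 𝒮' ⊆ 𝒮) ∧
    (∀ 𝒯 𝒯' : Finset (Finset V), IsNucleus G r s k 𝒯 → IsNucleus G r s k 𝒯' → 𝒯 ≠ 𝒯' →
      ∀ R : Finset V, ¬ (InKr G r 𝒯 R ∧ InKr G r 𝒯' R)) := by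
  constructor
  · rintro ⟨R, h1, h2⟩
    exact nuclei_nested G r s k k' hkk' 𝒮 𝒮' hS hS' R h1 h2
  · rintro 𝒯 𝒯' hT hT' hne R ⟨h1, h2⟩
    exact hne (le_antisymm
      (nuclei_nested G r s k k le_rfl 𝒯' 𝒯 hT' hT R h2 h1)
      (nuclei_nested G r s k k le_rfl 𝒯 𝒯' hT hT' R h1 h2))
end

section
/- Let G be a finite simple graph, r < s positive integers, k ≤ k' positive integers, 𝒮 a k-(r,s)-nucleus of G and 𝒮' a k'-(r,s)-nucleus of G such that 𝒮 ∩ 𝒮' ≠ ∅ (they share an s-clique). Then the union 𝒮 ∪ 𝒮' satisfies both nucleus conditions at level k: every R ∈ K_r(𝒮 ∪ 𝒮') has (𝒮 ∪ 𝒮')-degree at least k, and every two members of K_r(𝒮 ∪ 𝒮') are (𝒮 ∪ 𝒮')-connected. -/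
variable {V : Type*} [Fintype V] [DecidableEq V]

lemma step_mono {G : SimpleGraph V} {r : ℕ} {𝒮 𝒯 : Finset (Finset V)} (h : 𝒮 ⊆ 𝒯)
    {R R' : Finset V} (hs : Step G r 𝒮 R R') : Step G r 𝒯 R R' := by
  obtain ⟨⟨h1, S1, hS1, hR1⟩, ⟨h2, S2, hS2, hR2⟩, S3, hS3, hR3⟩ := hs
  exact ⟨⟨h1, S1, h hS1, hR1⟩, ⟨h2, S2, h hS2, hR2⟩, S3, h hS3, hR3⟩

/-- If a `k`-nucleus and a `k'`-nucleus (`k ≤ k'`) share an `s`-clique, then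
their union satisfies both nucleus conditions at level `k`. -/
theorem union_satisfies_nucleus_conditions (G : SimpleGraph V) (r s k k' : ℕ)
    (hr : 0 < r) (hrs : r < s) (hk : 0 < k) (hkk' : k ≤ k')
    (𝒮 𝒮' : Finset (Finset V))
    (hS : IsNucleus G r s k 𝒮) (hS' : IsNucleus G r s k' 𝒮')
    (hmeet : (𝒮 ∩ 𝒮').Nonempty) :
    DegCond G r k (𝒮 ∪ 𝒮') ∧ ConnCond G r (𝒮 ∪ 𝒮') := by
  obtain ⟨⟨hcs, hdeg, hconn⟩, -⟩ := hS
  obtain ⟨⟨hcs', hdeg', hconn'⟩, -⟩ := hS'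
  obtain ⟨S₀, hS₀⟩ := hmeet
  rw [Finset.mem_inter] at hS₀
  -- pick an r-subclique R₀ of S₀
  have hS₀clique : G.IsNClique s S₀ := hcs S₀ hS₀.1
  obtain ⟨R₀, hR₀sub, hR₀card⟩ :=
    Finset.exists_subset_card_eq (hS₀clique.2 ▸ hrs.le : r ≤ S₀.card)
  have hR₀clique : G.IsNClique r R₀ := ⟨hS₀clique.1.subset hR₀sub, hR₀card⟩
  have hR₀S : InKr G r 𝒮 R₀ := ⟨hR₀clique, S₀, hS₀.1, hR₀sub⟩
  have hR₀S' : InKr G r 𝒮' R₀ := ⟨hR₀clique, S₀, hS₀.2, hR₀sub⟩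
  have key : ∀ R, InKr G r (𝒮 ∪ 𝒮') R → SConnected G r (𝒮 ∪ 𝒮') R R₀ := by
    rintro R ⟨hRc, S, hSmem, hRS⟩
    rw [Finset.mem_union] at hSmem
    rcases hSmem with h | h
    · exact Relation.ReflTransGen.mono (fun a b => step_mono Finset.subset_union_left)
        _ _ (hconn R R₀ ⟨hRc, S, h, hRS⟩ hR₀S)
    · exact Relation.ReflTransGen.mono (fun a b => step_mono Finset.subset_union_right)
        _ _ (hconn' R R₀ ⟨hRc, S, h, hRS⟩ hR₀S')
  have symmStep : Symmetric (Step G r (𝒮 ∪ 𝒮')) := by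
    rintro a b ⟨h1, h2, S, hS, hsub⟩
    exact ⟨h2, h1, S, hS, Finset.union_comm a b ▸ hsub⟩
  constructor
  · rintro R ⟨hRc, S, hSmem, hRS⟩
    rw [Finset.mem_union] at hSmem
    have hfil : ∀ 𝒯 : Finset (Finset V), 𝒯 ⊆ 𝒮 ∪ 𝒮' → SDeg 𝒯 R ≤ SDeg (𝒮 ∪ 𝒮') R :=
      fun 𝒯 h => Finset.card_le_card (Finset.filter_subset_filter _ h)
    rcases hSmem with h | h
    · exact le_trans (hdeg R ⟨hRc, S, h, hRS⟩) (hfil 𝒮 Finset.subset_union_left)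
    · exact le_trans (le_trans hkk' (hdeg' R ⟨hRc, S, h, hRS⟩))
        (hfil 𝒮' Finset.subset_union_right)
  · intro R R' hR hR'
    exact (key R hR).trans ((@Relation.ReflTransGen.stdSymm _ _ ⟨fun a b h => symmStep h⟩).symm _ _ (key R' hR'))
end
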